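/- Fix integers k ≥ 2 and l ≥ 1. Let 𝔅 be the (l+1)×(l+1) matrix with rational entries whose rows are indexed by j = 0,…,l and columns by i = 1,…,l+1, with entry 𝔅(j,i) = C(k+j−1, 2j+i−l) + C(k+j, 2j+i−l), where C(n,m) denotes the binomial coefficient, with the convention that C(n,m) = 0 whenever m < 0 or m > n. For an integer p with 0 ≤ p ≤ ⌊l/2⌋, let 𝔅_p be the (l+1−2p)×(l+1−2p) submatrix of 𝔅 obtained by deleting the last 2p columns, the first p rows, and the last p rows (i.e., keeping rows p ≤ j ≤ l−p and columns 1 ≤ i ≤ l+1−2p). Then det 𝔅_p ≠ 0 for every such p. -/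

import Mathlib

open Polynomial Finset

/-- Binomial coefficient `C(n, m)` with an integer lower argument, extended by zero
for `m < 0` (and it is zero for `m > n` via `Nat.choose`). -/
def chooseZ (n : ℕ) (m : ℤ) : ℕ := if 0 ≤ m then n.choose m.toNat else 0

lemma choose_shift (x y : ℕ) : ∀ j : ℕ, y + j ≤ x →
    x.choose (y + j) * ∏ t ∈ range j, (y + 1 + t) =
      x.choose y * ∏ t ∈ range j, (x - y - t) := by
  intro j
  induction j with
  | zero => simp
  | succ j ih =>
    intro h
    have hj : y + j ≤ x := by omega
    have h1 : x.choose (y + (j+1)) * (y + 1 + j) = x.choose (y + j) * (x - (y + j)) := by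
      have := Nat.choose_succ_right_eq x (y + j)
      rw [show y + (j+1) = (y+j)+1 by ring, show y + 1 + j = (y+j)+1 by ring]
      exact this
    have h2 : x - (y + j) = x - y - j := by omega
    rw [prod_range_succ, prod_range_succ]
    calc x.choose (y + (j+1)) * ((∏ t ∈ range j, (y + 1 + t)) * (y + 1 + j))
        = (x.choose (y + (j+1)) * (y + 1 + j)) * ∏ t ∈ range j, (y + 1 + t) := by ring
      _ = (x.choose (y + j) * (x - (y+j))) * ∏ t ∈ range j, (y + 1 + t) := by rw [h1]
      _ = (x.choose (y + j) * ∏ t ∈ range j, (y + 1 + t)) * (x - (y+j)) := by ring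
      _ = (x.choose y * ∏ t ∈ range j, (x - y - t)) * (x - y - j) := by rw [ih hj, h2]
      _ = _ := by ring

lemma subdet_ne_zero (L y : ℕ) (x : Fin (L+1) → ℕ)
    (hx : ∀ i, y + L ≤ x i) (hinj : Function.Injective x) :
    (Matrix.of fun i j : Fin (L+1) => (((x i).choose (y + (j:ℕ)) : ℚ))).det ≠ 0 := by
  set p : Fin (L+1) → ℚ[X] := fun j => ∏ t ∈ range (j:ℕ), (X - C ((y:ℚ) + t)) with hp
  have hmonic : ∀ j, (p j).Monic := fun j => monic_prod_of_monic _ _ (fun t _ => monic_X_sub_C _)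
  have hdeg : ∀ j : Fin (L+1), (p j).natDegree = (j:ℕ) := by
    intro j
    rw [hp]
    rw [natDegree_prod_of_monic _ _ (fun t _ => monic_X_sub_C _)]
    simp only [natDegree_X_sub_C]
    simp
  have key : ∀ i j : Fin (L+1),
      (((x i).choose (y + (j:ℕ)) : ℚ)) =
        ((x i).choose y : ℚ) * ((∏ t ∈ range (j:ℕ), ((y:ℚ) + 1 + t))⁻¹
          * (p j).eval ((x i : ℚ))) := by
    intro i j
    have hyj : y + (j:ℕ) ≤ x i := le_trans (by omega) (hx i)
    set wn : ℕ := ∏ t ∈ range (j:ℕ), (y + 1 + t) with hwn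
    set Pn : ℕ := ∏ t ∈ range (j:ℕ), (x i - y - t) with hPn
    have hcast : ((x i).choose (y + (j:ℕ)) : ℚ) * wn = ((x i).choose y : ℚ) * Pn := by
      have := choose_shift (x i) y (j:ℕ) hyj
      exact_mod_cast congrArg (Nat.cast : ℕ → ℚ) this
    have hw_eq : (∏ t ∈ range (j:ℕ), ((y:ℚ) + 1 + t)) = (wn : ℚ) := by
      rw [hwn, Nat.cast_prod]; push_cast; rfl
    have heval : (p j).eval ((x i : ℚ)) = (Pn : ℚ) := by
      rw [hp, hPn, eval_prod, Nat.cast_prod]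
      apply prod_congr rfl
      intro t ht
      have ht' : t < (j:ℕ) := mem_range.mp ht
      have hle : y + t ≤ x i := by omega
      rw [eval_sub, eval_X, eval_C]
      rw [show x i - y - t = x i - (y + t) by omega, Nat.cast_sub hle]
      push_cast; ring
    have hwne : (wn : ℚ) ≠ 0 := by
      rw [hwn]
      push_cast
      apply prod_ne_zero_iff.mpr
      intro t _
      positivity
    rw [heval, hw_eq]
    field_simp
    linear_combination hcast
  have hmat : (Matrix.of fun i j : Fin (L+1) => (((x i).choose (y + (j:ℕ)) : ℚ))) =
      Matrix.of (fun i j : Fin (L+1) => ((x i).choose y : ℚ) *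
        ((Matrix.of fun i j : Fin (L+1) =>
          (∏ t ∈ range (j:ℕ), ((y:ℚ) + 1 + t))⁻¹ * (p j).eval ((x i : ℚ))) i j)) := by
    ext i j; exact key i j
  rw [hmat, Matrix.det_mul_column]
  have hmat2 : (Matrix.of fun i j : Fin (L+1) =>
      (∏ t ∈ range (j:ℕ), ((y:ℚ) + 1 + t))⁻¹ * (p j).eval ((x i : ℚ))) =
      Matrix.of (fun i j : Fin (L+1) =>
        (fun j : Fin (L+1) => (∏ t ∈ range (j:ℕ), ((y:ℚ) + 1 + t))⁻¹) j *
        ((Matrix.of fun i j : Fin (L+1) => (p j).eval ((x i : ℚ))) i j)) := rfl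
  rw [hmat2, Matrix.det_mul_row]
  rw [← Matrix.det_eval_matrixOfPolynomials_eq_det_vandermonde (fun i => ((x i : ℚ))) p hdeg hmonic]
  apply mul_ne_zero
  · apply prod_ne_zero_iff.mpr
    intro i _
    have h1 : y ≤ x i := le_trans (by omega) (hx i)
    have := Nat.choose_pos h1
    positivity
  apply mul_ne_zero
  · apply prod_ne_zero_iff.mpr
    intro j _
    apply inv_ne_zero
    apply prod_ne_zero_iff.mpr
    intro t _
    positivity
  · rw [Matrix.det_vandermonde_ne_zero_iff]
    intro i j hij
    have h2 : ((x i : ℚ)) = ((x j : ℚ)) := hij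
    exact hinj (Nat.cast_injective h2)


section Main

variable (K' L : ℕ)

noncomputable def tpoly (a : ℕ) : ℚ[X] :=
  ((2 + X) * (1 + X)^(K' + 1 + a)) * X^(2*(L - a))

lemma coeff_two_add (n d : ℕ) : ((2 + X : ℚ[X]) * (1 + X)^n).coeff d
    = (n.choose d : ℚ) + ((n+1).choose d : ℚ) := by
  have h : (2 + X : ℚ[X]) * (1 + X)^n = (1 + X)^n + (1 + X)^(n+1) := by ring
  rw [h, coeff_add, coeff_one_add_X_pow, coeff_one_add_X_pow]

lemma coeff_tpoly (a m : ℕ) : (tpoly K' L a).coeff m =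
    if 2*(L - a) ≤ m then
      (((K' + 1 + a).choose (m - 2*(L-a)) : ℚ) + ((K' + 2 + a).choose (m - 2*(L-a)) : ℚ))
    else 0 := by
  rw [tpoly, coeff_mul_X_pow']
  split
  · rw [coeff_two_add]
    norm_num
    ring_nf
  · rfl

lemma tpoly_natDegree_le (a : ℕ) (ha : a ≤ L) :
    (tpoly K' L a).natDegree ≤ 2*L + K' + 2 := by
  rw [tpoly]
  refine le_trans (natDegree_mul_le) ?_
  have h1 : ((2 + X : ℚ[X]) * (1 + X)^(K' + 1 + a)).natDegree ≤ K' + 2 + a := by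
    refine le_trans (natDegree_mul_le) ?_
    have h2 : (2 + X : ℚ[X]).natDegree ≤ 1 := by
      refine le_trans (natDegree_add_le _ _) ?_
      simp
    have h3 : ((1 + X : ℚ[X])^(K' + 1 + a)).natDegree ≤ K' + 1 + a := by
      refine le_trans (natDegree_pow_le) ?_
      have : (1 + X : ℚ[X]).natDegree ≤ 1 := by
        refine le_trans (natDegree_add_le _ _) ?_
        simp
      calc (K' + 1 + a) * (1 + X : ℚ[X]).natDegree ≤ (K' + 1 + a) * 1 :=
        Nat.mul_le_mul_left _ this
      _ = K' + 1 + a := by ring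
    omega
  have h4 : ((X : ℚ[X])^(2*(L-a))).natDegree ≤ 2*(L-a) := by
    simp [natDegree_X_pow]
  omega

end Main

section Symmetry

open RatFunc

variable (K' L : ℕ)

noncomputable abbrev Fx : RatFunc ℚ := algebraMap (Polynomial ℚ) (RatFunc ℚ) Polynomial.X

lemma one_add_Fx_ne_zero : (1 + Fx) ≠ 0 := by
  have h0 : ((1 : ℚ[X]) + Polynomial.X) ≠ 0 := by
    intro h
    have := congrArg (fun p => Polynomial.coeff p 1) h
    norm_num [Polynomial.coeff_one] at this
  intro h
  apply h0
  apply RatFunc.algebraMap_injective ℚ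
  rw [map_add, map_one, h, map_zero]

noncomputable abbrev sigmaF : RatFunc ℚ := -Fx / (1 + Fx)

lemma one_add_sigma_mul : (1 + sigmaF) * (1 + Fx) = 1 := by
  have hne := one_add_Fx_ne_zero
  rw [sigmaF, add_mul, one_mul, div_mul_cancel₀ _ hne]
  ring

lemma one_add_sigma : 1 + sigmaF = (1 + Fx)⁻¹ :=
  eq_inv_of_mul_eq_one_left (one_add_sigma_mul)

lemma two_add_sigma_mul : (2 + sigmaF) * (1 + Fx) = 2 + Fx := by
  have hne := one_add_Fx_ne_zero
  rw [sigmaF, add_mul, div_mul_cancel₀ _ hne]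
  ring

lemma two_add_sigma : 2 + sigmaF = (2 + Fx) * (1 + Fx)⁻¹ := by
  rw [← two_add_sigma_mul, mul_assoc, mul_inv_cancel₀ one_add_Fx_ne_zero, mul_one]

lemma sigma_pow_even (e : ℕ) : sigmaF ^ (2*e) = Fx^(2*e) * ((1 + Fx)⁻¹)^(2*e) := by
  rw [sigmaF, div_pow, Even.neg_pow (even_two_mul e), div_eq_mul_inv, inv_pow]

lemma pow_cancel {F : Type*} [Field F] (u : F) (hu : u ≠ 0) (N d : ℕ) (h : d ≤ N) :
    u^N * (u⁻¹)^d = u^(N - d) := by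
  rw [inv_pow, ← pow_sub₀ u hu h]

/-- The key symmetry: `(1+x)^N ⬝ (t a)(σ) = t a` in `RatFunc ℚ`, where `σ = -x/(1+x)`
and `N = 2L + 2K' + 3`. -/
lemma symm_tpoly (a : ℕ) (ha : a ≤ L) :
    (1 + Fx)^(2*L + 2*K' + 3) * (aeval sigmaF (tpoly K' L a))
      = algebraMap (Polynomial ℚ) (RatFunc ℚ) (tpoly K' L a) := by
  have hne := one_add_Fx_ne_zero
  have hσt : aeval sigmaF (tpoly K' L a)
      = (2 + sigmaF) * (1 + sigmaF)^(K' + 1 + a) * sigmaF^(2*(L-a)) := by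
    simp only [tpoly, map_mul, map_pow, map_add, map_one, map_ofNat, aeval_X]
  have hmap : algebraMap (Polynomial ℚ) (RatFunc ℚ) (tpoly K' L a)
      = (2 + Fx) * (1 + Fx)^(K' + 1 + a) * Fx^(2*(L-a)) := by
    simp only [tpoly, map_mul, map_pow, map_add, map_one, map_ofNat]
  rw [hσt, hmap, one_add_sigma, two_add_sigma, sigma_pow_even]
  have hd : 1 + (K' + 1 + a) + 2*(L - a) ≤ 2*L + 2*K' + 3 := by omega
  calc (1 + Fx)^(2*L + 2*K' + 3) * ((2 + Fx) * (1 + Fx)⁻¹ * ((1 + Fx)⁻¹)^(K' + 1 + a)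
          * (Fx^(2*(L-a)) * ((1 + Fx)⁻¹)^(2*(L-a))))
      = ((2 + Fx) * Fx^(2*(L-a))) *
          ((1 + Fx)^(2*L + 2*K' + 3) * ((1 + Fx)⁻¹)^(1 + (K' + 1 + a) + 2*(L-a))) := by
        rw [pow_add, pow_add]; ring
    _ = ((2 + Fx) * Fx^(2*(L-a))) * (1 + Fx)^(2*L + 2*K' + 3 - (1 + (K' + 1 + a) + 2*(L-a))) := by
        rw [pow_cancel _ hne _ _ hd]
    _ = _ := by
        rw [show 2*L + 2*K' + 3 - (1 + (K' + 1 + a) + 2*(L-a)) = K' + 1 + a by omega]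
        ring

end Symmetry

lemma rf_smul (c : ℚ) (y : RatFunc ℚ) : c • y = algebraMap ℚ (RatFunc ℚ) c * y := by
  rw [RatFunc.smul_eq_C_mul, eq_ratCast RatFunc.C c, eq_ratCast (algebraMap ℚ (RatFunc ℚ)) c]

section MainDet

open Polynomial Finset

theorem main_det (K L : ℕ) (hK : 2 ≤ K) :
    (Matrix.of fun a b : Fin (L + 1) =>
      ((chooseZ (K + (a : ℕ) - 1) (2 * ((a : ℕ) : ℤ) + ((b : ℕ) + 1) - (L : ℤ))
        + chooseZ (K + (a : ℕ)) (2 * ((a : ℕ) : ℤ) + ((b : ℕ) + 1) - (L : ℤ)) : ℕ) : ℚ)).det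
      ≠ 0 := by
  obtain ⟨K', rfl⟩ : ∃ K', K = K' + 2 := ⟨K - 2, by omega⟩
  intro hdet
  obtain ⟨v, hv0, hvM⟩ := Matrix.exists_vecMul_eq_zero_iff.mpr hdet
  set N := 2*L + 2*K' + 3 with hN
  set G : ℚ[X] := ∑ a : Fin (L+1), v a • tpoly K' L (a : ℕ) with hG
  -- entry bridge
  have hentry : ∀ a b : Fin (L+1), (tpoly K' L (a:ℕ)).coeff (L+1+(b:ℕ)) =
      ((chooseZ (K' + 2 + (a : ℕ) - 1) (2 * ((a : ℕ) : ℤ) + ((b : ℕ) + 1) - (L : ℤ))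
        + chooseZ (K' + 2 + (a : ℕ)) (2 * ((a : ℕ) : ℤ) + ((b : ℕ) + 1) - (L : ℤ)) : ℕ) : ℚ) := by
    intro a b
    have ha : (a:ℕ) ≤ L := by omega
    rw [coeff_tpoly]
    by_cases hc : 2*(L - (a:ℕ)) ≤ L+1+(b:ℕ)
    · rw [if_pos hc]
      have hz : (0:ℤ) ≤ 2 * ((a : ℕ) : ℤ) + ((b : ℕ) + 1) - (L : ℤ) := by omega
      have harg : (2 * ((a : ℕ) : ℤ) + ((b : ℕ) + 1) - (L : ℤ)).toNat
          = L+1+(b:ℕ) - 2*(L-(a:ℕ)) := by omega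
      have hk1 : K' + 2 + (a:ℕ) - 1 = K' + 1 + (a:ℕ) := by omega
      rw [chooseZ, chooseZ, if_pos hz, if_pos hz, harg, hk1]
      push_cast
      ring
    · rw [if_neg hc]
      have hz : ¬ ((0:ℤ) ≤ 2 * ((a : ℕ) : ℤ) + ((b : ℕ) + 1) - (L : ℤ)) := by omega
      rw [chooseZ, chooseZ, if_neg hz, if_neg hz]
      norm_num
  have hGcoeff : ∀ m : ℕ, G.coeff m = ∑ a : Fin (L+1), v a * (tpoly K' L (a:ℕ)).coeff m := by
    intro m
    rw [hG, finset_sum_coeff]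
    exact sum_congr rfl (fun a _ => by rw [coeff_smul, smul_eq_mul])
  -- Step 1: middle coefficients vanish
  have hmid : ∀ m, L+1 ≤ m → m ≤ 2*L+1 → G.coeff m = 0 := by
    intro m h1 h2
    have hb : m - (L+1) < L + 1 := by omega
    have hm : m = L+1+((⟨m - (L+1), hb⟩ : Fin (L+1)):ℕ) := by simp; omega
    rw [hm, hGcoeff]
    have hrow := congrFun hvM ⟨m - (L+1), hb⟩
    simp only [Matrix.vecMul, dotProduct, Pi.zero_apply, Matrix.of_apply] at hrow
    rw [← hrow]
    exact sum_congr rfl (fun a _ => by rw [hentry])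
  -- degree bound
  have hdegG : G.natDegree ≤ 2*L + K' + 2 := by
    rw [hG]
    apply natDegree_sum_le_of_forall_le
    intro a _
    refine le_trans (natDegree_smul_le _ _) (tpoly_natDegree_le K' L (a:ℕ) (by omega))
  -- smul compatibility of algebraMap
  have hsm : ∀ (c : ℚ) (p : ℚ[X]), algebraMap ℚ[X] (RatFunc ℚ) (c • p)
      = c • algebraMap ℚ[X] (RatFunc ℚ) p := fun c p => by
    rw [Algebra.smul_def, rf_smul, map_mul, ← IsScalarTower.algebraMap_apply]
  -- Step 2: symmetry, Q = G
  set Q : ℚ[X] := ∑ i ∈ range (N+1),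
      ((-1)^i * G.coeff i) • (X^i * (1+X)^(N-i)) with hQ
  have hQG : Q = G := by
    apply RatFunc.algebraMap_injective ℚ
    have hGimg : algebraMap ℚ[X] (RatFunc ℚ) G = (1 + Fx)^N * aeval sigmaF G := by
      rw [hG, map_sum, map_sum, Finset.mul_sum]
      refine sum_congr rfl (fun a _ => ?_)
      rw [hsm, rf_smul, Algebra.smul_def, map_mul, AlgHom.commutes, ← symm_tpoly K' L (a:ℕ) (by omega)]
      ring
    have hQimg : algebraMap ℚ[X] (RatFunc ℚ) Q = (1 + Fx)^N * aeval sigmaF G := by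
      have haev : aeval sigmaF G = ∑ i ∈ range (N+1), G.coeff i • sigmaF^i :=
        by
          rw [aeval_eq_sum_range' (lt_of_le_of_lt hdegG (by omega : 2*L + K' + 2 < N+1)) sigmaF]
          exact sum_congr rfl (fun i _ => by rw [rf_smul, Algebra.smul_def])
      rw [hQ, map_sum, haev, Finset.mul_sum]
      refine sum_congr rfl (fun i hi => ?_)
      have hiN : i ≤ N := by have := mem_range.mp hi; omega
      rw [hsm, map_mul, map_pow, map_pow, map_add, map_one, rf_smul, rf_smul, mul_left_comm ((1 + Fx)^N)]
      have hσ : (1 + Fx)^N * sigmaF^i = (-1)^i * (Fx^i * ((1+Fx)^(N-i))) := by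
        have hs : sigmaF = (-1) * Fx * (1+Fx)⁻¹ := by
          rw [sigmaF, neg_div, div_eq_mul_inv]; ring
        have hstep : (1 + Fx)^N * sigmaF^i
            = (-1)^i * Fx^i * ((1+Fx)^N * ((1+Fx)⁻¹)^i) := by
          rw [hs, mul_pow, mul_pow]; ring
        rw [hstep, pow_cancel _ one_add_Fx_ne_zero _ _ hiN]
        ring
      rw [hσ, map_mul, map_pow, map_neg, map_one]
      ring
    exact hQimg.trans hGimg.symm
  -- Step 3: linear relations on low coefficients
  have hrel : ∀ s : Fin (L+1), ∑ i : Fin (L+1),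
      ((-1)^(i:ℕ) * G.coeff (i:ℕ)) * (((N - (i:ℕ)).choose ((L+1+(s:ℕ)) - (i:ℕ)) : ℚ)) = 0 := by
    intro s
    have hm1 : L+1 ≤ L+1+(s:ℕ) := by omega
    have hm2 : L+1+(s:ℕ) ≤ 2*L+1 := by omega
    set m := L+1+(s:ℕ) with hmdef
    have h0 : G.coeff m = 0 := hmid m hm1 hm2
    have hterm : ∀ i : ℕ, ((((-1:ℚ))^i * G.coeff i) • ((X:ℚ[X])^i * (1+X)^(N-i))).coeff m
        = (-1)^i * G.coeff i * (if i ≤ m then (((N-i).choose (m-i)) : ℚ) else 0) := by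
      intro i
      rw [coeff_smul, smul_eq_mul]
      congr 1
      rw [mul_comm ((X:ℚ[X])^i) _, coeff_mul_X_pow']
      split
      · rw [coeff_one_add_X_pow]
      · rfl
    have hq : Q.coeff m = ∑ i ∈ range (N+1),
        (-1)^i * G.coeff i * (if i ≤ m then (((N-i).choose (m-i)) : ℚ) else 0) := by
      rw [hQ, finset_sum_coeff]
      exact sum_congr rfl (fun i _ => hterm i)
    have hsub : ∑ i ∈ range (N+1),
        (-1)^i * G.coeff i * (if i ≤ m then (((N-i).choose (m-i)) : ℚ) else 0)
        = ∑ i ∈ range (L+1),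
        (-1)^i * G.coeff i * (if i ≤ m then (((N-i).choose (m-i)) : ℚ) else 0) := by
      refine (Finset.sum_subset (by intro x hx; simp at hx ⊢; omega) ?_).symm
      intro i hi1 hi2
      simp only [mem_range] at hi1 hi2
      by_cases hc : i ≤ m
      · have : G.coeff i = 0 := hmid i (by omega) (by omega)
        rw [this]; ring
      · rw [if_neg hc]; ring
    have hfin : ∑ i ∈ range (L+1),
        (-1)^i * G.coeff i * (if i ≤ m then (((N-i).choose (m-i)) : ℚ) else 0)
        = ∑ i : Fin (L+1),
        ((-1)^(i:ℕ) * G.coeff (i:ℕ)) * (((N - (i:ℕ)).choose (m - (i:ℕ)) : ℚ)) := by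
      rw [← Fin.sum_univ_eq_sum_range]
      refine sum_congr rfl (fun i _ => ?_)
      rw [if_pos (by omega)]
    have : Q.coeff m = G.coeff m := by rw [hQG]
    rw [hq, hsub, hfin, h0] at this
    exact this
  -- Step 4: the auxiliary determinant is nonzero, so low coefficients vanish
  have hDdet : (Matrix.of fun i s : Fin (L+1) =>
      (((N - (i:ℕ)).choose ((L+1+(s:ℕ)) - (i:ℕ)) : ℚ))).det ≠ 0 := by
    have hE := subdet_ne_zero L (2*K'+2) (fun i => N - (i:ℕ))
      (fun i => by
        have hi := i.isLt
        show 2*K'+2 + L ≤ N - (i:ℕ)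
        omega)
      (fun i j hij => by
        apply Fin.ext
        have h' : N - (i:ℕ) = N - (j:ℕ) := hij
        have hi := i.isLt
        have hj := j.isLt
        omega)
    have hDE : (Matrix.of fun i s : Fin (L+1) =>
        (((N - (i:ℕ)).choose ((L+1+(s:ℕ)) - (i:ℕ)) : ℚ)))
        = (Matrix.of fun i j : Fin (L+1) =>
            (((N - (i:ℕ)).choose (2*K'+2 + (j:ℕ)) : ℚ))).submatrix id Fin.revPerm := by
      ext i s
      simp only [Matrix.submatrix_apply, Matrix.of_apply, id_eq]
      have hrev : ((Fin.revPerm s : Fin (L+1)) : ℕ) = L - (s:ℕ) := by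
        simp [Fin.revPerm, Fin.val_rev]
      rw [hrev]
      have hi : (i:ℕ) ≤ L := by omega
      have hs : (s:ℕ) ≤ L := by omega
      have hkle : (L+1+(s:ℕ)) - (i:ℕ) ≤ N - (i:ℕ) := by omega
      have harg : N - (i:ℕ) - ((L+1+(s:ℕ)) - (i:ℕ)) = 2*K'+2 + (L - (s:ℕ)) := by omega
      rw [← Nat.choose_symm hkle, harg]
    rw [hDE, Matrix.det_permute']
    refine mul_ne_zero ?_ hE
    rcases Int.units_eq_one_or (Equiv.Perm.sign (Fin.revPerm : Equiv.Perm (Fin (L+1)))) with h | h <;>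
      rw [h] <;> norm_num
  have hlowL : ∀ i : Fin (L+1), G.coeff (i:ℕ) = 0 := by
    have hvm : Matrix.vecMul (fun i : Fin (L+1) => (-1)^(i:ℕ) * G.coeff (i:ℕ))
        (Matrix.of fun i s : Fin (L+1) =>
          (((N - (i:ℕ)).choose ((L+1+(s:ℕ)) - (i:ℕ)) : ℚ))) = 0 := by
      funext s
      simpa [Matrix.vecMul, dotProduct] using hrel s
    have := Matrix.eq_zero_of_vecMul_eq_zero hDdet hvm
    intro i
    have hi := congrFun this i
    simp only [Pi.zero_apply, mul_eq_zero] at hi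
    rcases hi with h | h
    · exact absurd h (by positivity)
    · exact h
  -- Step 5: G = 0
  have hlow : ∀ i, i ≤ 2*L+1 → G.coeff i = 0 := by
    intro i hi
    by_cases h : i ≤ L
    · exact hlowL ⟨i, by omega⟩
    · exact hmid i (by omega) hi
  have hdvd1 : (X:ℚ[X])^(2*L+2) ∣ G :=
    Polynomial.X_pow_dvd_iff.mpr (fun d hd => hlow d (by omega))
  have hdvd2 : ((1+X:ℚ[X]))^(K'+1) ∣ G := by
    rw [hG]
    apply Finset.dvd_sum
    intro a _
    have h1 : ((1+X:ℚ[X]))^(K'+1) ∣ tpoly K' L (a:ℕ) := by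
      rw [tpoly]
      exact Dvd.dvd.mul_right (Dvd.dvd.mul_left (pow_dvd_pow _ (by omega)) _) _
    rw [Polynomial.smul_eq_C_mul]
    exact h1.mul_left _
  have hcop : IsCoprime ((X:ℚ[X])^(2*L+2)) (((1+X:ℚ[X]))^(K'+1)) :=
    IsCoprime.pow ⟨-1, 1, by ring⟩
  have hG0 : G = 0 := by
    by_contra hGne
    have hmon1 : ((X:ℚ[X])^(2*L+2)).Monic := monic_X_pow _
    have hmon2 : ((1+X:ℚ[X])^(K'+1)).Monic := by
      apply Polynomial.Monic.pow
      rw [add_comm]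
      exact monic_X_add_C 1
    have hdeg2 : ((X:ℚ[X])^(2*L+2) * ((1+X:ℚ[X]))^(K'+1)).natDegree = 2*L+K'+3 := by
      have h1 : ((1:ℚ[X]) + X).natDegree = 1 := by
        rw [add_comm]
        simpa using natDegree_X_add_C (1:ℚ)
      rw [hmon1.natDegree_mul hmon2, natDegree_X_pow, natDegree_pow, h1]
      ring
    have := Polynomial.natDegree_le_of_dvd (hcop.mul_dvd hdvd1 hdvd2) hGne
    omega
  -- Step 6: contradiction with v ≠ 0
  obtain ⟨a1, ha1⟩ := Function.ne_iff.mp hv0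
  set S := Finset.univ.filter (fun a : Fin (L+1) => v a ≠ 0) with hS
  have hSne : S.Nonempty := ⟨a1, by simp [hS]; exact ha1⟩
  set a0 := S.max' hSne with ha0
  have ha0v : v a0 ≠ 0 := (Finset.mem_filter.mp (S.max'_mem hSne)).2
  have hcoeff0 : G.coeff (2*(L - (a0:ℕ))) = v a0 * 2 := by
    rw [hGcoeff]
    rw [Finset.sum_eq_single a0]
    · rw [coeff_tpoly, if_pos le_rfl, Nat.sub_self, Nat.choose_zero_right,
        Nat.choose_zero_right]
      norm_num
    · intro a _ hne
      by_cases hva : v a = 0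
      · rw [hva, zero_mul]
      · have haS : a ∈ S := by rw [hS, Finset.mem_filter]; exact ⟨Finset.mem_univ a, hva⟩
        have hlt : a < a0 := lt_of_le_of_ne (S.le_max' a haS) hne
        have hltv : (a:ℕ) < (a0:ℕ) := hlt
        have ha0L : (a0:ℕ) ≤ L := by omega
        rw [coeff_tpoly, if_neg (by omega), mul_zero]
    · intro h; exact absurd (Finset.mem_univ a0) h
  rw [hG0, coeff_zero] at hcoeff0
  have : v a0 = 0 := by linarith [hcoeff0]
  exact ha0v this

end MainDet

/-- (Lemma `detlem` a.)  For `k ≥ 2`, `l ≥ 1` and `0 ≤ p ≤ ⌊l/2⌋`, the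
submatrix `𝔅_p` of the `(l+1) × (l+1)` matrix `𝔅(j, i) = C(k+j−1, 2j+i−l) + C(k+j, 2j+i−l)`
(rows `j = 0, …, l`, columns `i = 1, …, l+1`), obtained by deleting the last `2p` columns,
the first `p` rows and the last `p` rows, has nonzero determinant.  Here row index `a` and
column index `b` of `𝔅_p` correspond to `j = p + a` and `i = 1 + b`. -/
theorem stmt_11 (k l : ℕ) (hk : 2 ≤ k) (hl : 1 ≤ l) (p : ℕ) (hp : p ≤ l / 2) :
    (Matrix.of fun a b : Fin (l + 1 - 2 * p) =>
      ((chooseZ (k + p + (a : ℕ) - 1)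
          (2 * ((p : ℤ) + (a : ℕ)) + ((b : ℕ) + 1) - (l : ℤ))
        + chooseZ (k + p + (a : ℕ))
          (2 * ((p : ℤ) + (a : ℕ)) + ((b : ℕ) + 1) - (l : ℤ)) : ℕ) : ℚ)).det ≠ 0 := by
  have h2p : 2 * p ≤ l := by omega
  have hsz : l + 1 - 2 * p = (l - 2*p) + 1 := by omega
  have hmain := main_det (k + p) (l - 2*p) (by omega)
  have heq : (Matrix.of fun a b : Fin (l + 1 - 2 * p) =>
      ((chooseZ (k + p + (a : ℕ) - 1) (2 * ((p : ℤ) + (a : ℕ)) + ((b : ℕ) + 1) - (l : ℤ))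
        + chooseZ (k + p + (a : ℕ)) (2 * ((p : ℤ) + (a : ℕ)) + ((b : ℕ) + 1) - (l : ℤ)) : ℕ) : ℚ))
      = Matrix.reindex (finCongr hsz).symm (finCongr hsz).symm
        (Matrix.of fun a b : Fin ((l - 2*p) + 1) =>
          ((chooseZ (k + p + (a : ℕ) - 1)
              (2 * ((a : ℕ) : ℤ) + ((b : ℕ) + 1) - ((l - 2*p : ℕ) : ℤ))
            + chooseZ (k + p + (a : ℕ))
              (2 * ((a : ℕ) : ℤ) + ((b : ℕ) + 1) - ((l - 2*p : ℕ) : ℤ)) : ℕ) : ℚ)) := by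
    ext a b
    simp only [Matrix.reindex_apply, Matrix.submatrix_apply, Matrix.of_apply, Equiv.symm_symm,
      finCongr_apply, Fin.coe_cast]
    have harg : 2 * ((p : ℤ) + (a : ℕ)) + ((b : ℕ) + 1) - (l : ℤ)
        = 2 * (((a : ℕ) : ℕ) : ℤ) + ((b : ℕ) + 1) - ((l - 2*p : ℕ) : ℤ) := by
      push_cast [Nat.cast_sub h2p]
      ring
    rw [harg]
  rw [heq, Matrix.det_reindex_self]
  exact hmain
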